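/- arXiv:1908.07703 — 2 statements merged into one kernel-verified Lean document; each statement's English description precedes it below -/
import Mathlib

section
/- Let 0 < q < 1 < p and μ > 0, and let φ, ψ ∈ C(Ω̄)∩C²(Ω) satisfy 0 ≤ φ ≤ ψ on Ω, −Δφ ≤ μ φ^q in Ω, and −Δψ ≥ μ ψ^q + ψ^p in Ω. Then for every β ∈ (0, 1] and every continuous function ω with β·φ ≤ ω ≤ ψ on Ω, one has −β^q·Δφ(x) ≤ μ·ω(x)^q + ω(x)^p ≤ −Δψ(x) for all x ∈ Ω; that is, condition (G2) holds with exponent α = q for the nonlinearity g(x,u) = μ u^q + u^p. -/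
open MeasureTheory Set Real
open scoped ENNReal NNReal

noncomputable section

/-- The Laplacian of `u : ℝ^N → ℝ`, as the sum of second partial derivatives. -/
def lapl {N : ℕ} (u : EuclideanSpace ℝ (Fin N) → ℝ) (x : EuclideanSpace ℝ (Fin N)) : ℝ :=
  ∑ i : Fin N, fderiv ℝ (fun y => fderiv ℝ u y (EuclideanSpace.single i 1)) x
    (EuclideanSpace.single i 1)

/-- The `L^p` norm of `u` on `Ω`. -/
def LpNorm {N : ℕ} (Ω : Set (EuclideanSpace ℝ (Fin N))) (p : ℝ≥0∞)
    (u : EuclideanSpace ℝ (Fin N) → ℝ) : ℝ :=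
  (eLpNorm u p (volume.restrict Ω)).toReal

/-- The `L²` norm of the gradient of `u` on `Ω`. -/
def gradNorm2 {N : ℕ} (Ω : Set (EuclideanSpace ℝ (Fin N)))
    (u : EuclideanSpace ℝ (Fin N) → ℝ) : ℝ :=
  (eLpNorm (fun x => gradient u x) 2 (volume.restrict Ω)).toReal

/-- Condition (G2) holds with exponent `α = q` for the concave-convex nonlinearity
`g(x, u) = μ u^q + u^p`, given the sub/supersolution inequalities for `φ` and `ψ`. -/
theorem stmt_8 {N : ℕ} (hN : 1 ≤ N) (Ω : Set (EuclideanSpace ℝ (Fin N)))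
    (hΩo : IsOpen Ω) (hΩconn : IsConnected Ω) (hΩbd : Bornology.IsBounded Ω)
    (q p μ : ℝ) (hq0 : 0 < q) (hq1 : q < 1) (hp : 1 < p) (hμ : 0 < μ)
    (φ ψ : EuclideanSpace ℝ (Fin N) → ℝ)
    (hφc : ContinuousOn φ (closure Ω)) (hφ2 : ContDiffOn ℝ 2 φ Ω)
    (hψc : ContinuousOn ψ (closure Ω)) (hψ2 : ContDiffOn ℝ 2 ψ Ω)
    (hφψ : ∀ x ∈ Ω, 0 ≤ φ x ∧ φ x ≤ ψ x)
    (hsub : ∀ x ∈ Ω, -lapl φ x ≤ μ * φ x ^ q)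
    (hsup : ∀ x ∈ Ω, -lapl ψ x ≥ μ * ψ x ^ q + ψ x ^ p) :
    ∀ β : ℝ, 0 < β → β ≤ 1 →
      ∀ ω : EuclideanSpace ℝ (Fin N) → ℝ, ContinuousOn ω (closure Ω) →
        (∀ x ∈ Ω, β * φ x ≤ ω x ∧ ω x ≤ ψ x) →
        ∀ x ∈ Ω, (-(β ^ q)) * lapl φ x ≤ μ * ω x ^ q + ω x ^ p ∧
          μ * ω x ^ q + ω x ^ p ≤ -lapl ψ x := by
  intro β hβ0 hβ1 ω hωc hω x hx
  obtain ⟨hφ0, hφψx⟩ := hφψ x hx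
  obtain ⟨hβφω, hωψ⟩ := hω x hx
  have hω0 : 0 ≤ ω x := le_trans (by positivity) hβφω
  have hψ0 : 0 ≤ ψ x := le_trans hω0 hωψ
  constructor
  · have h1 : (-(β ^ q)) * lapl φ x ≤ β ^ q * (μ * φ x ^ q) := by
      have := hsub x hx
      nlinarith [Real.rpow_pos_of_pos hβ0 q]
    have h2 : β ^ q * (μ * φ x ^ q) = μ * (β * φ x) ^ q := by
      rw [Real.mul_rpow hβ0.le hφ0]; ring
    have h3 : μ * (β * φ x) ^ q ≤ μ * ω x ^ q := by
      gcongr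
    have h4 : (0:ℝ) ≤ ω x ^ p := Real.rpow_nonneg hω0 p
    linarith
  · have h3 : μ * ω x ^ q ≤ μ * ψ x ^ q := by
      gcongr
    have h4 : ω x ^ p ≤ ψ x ^ p := Real.rpow_le_rpow hω0 hωψ (by linarith)
    have := hsup x hx
    linarith
end
end

section
/- Let ξ be a torsion function of Ω with sup_Ω ξ > 0, let 0 < q < 1, and let M₁ > 0 satisfy M₁ > π·M₁³·(sup_Ω ξ)³ and M₁·sup_Ω ξ ≤ π/2. Set μ₀ := (M₁ − π·M₁³·(sup_Ω ξ)³) / (M₁^q·(sup_Ω ξ)^q). Then μ₀ > 0 and for every μ ∈ (0, μ₀) the function ψ := M₁·ξ satisfies 0 ≤ ψ ≤ π/2 on Ω and −Δψ(x) = M₁ > μ·ψ(x)^q + π·sin³(ψ(x)) for all x ∈ Ω; that is, ψ is a supersolution of −Δu = μ u^q + π sin³(u) with zero Dirichlet boundary data. -/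
open MeasureTheory Set Real
open scoped ENNReal NNReal

noncomputable section

/-- A torsion function of `Ω`: `ξ ∈ C(Ω̄) ∩ C²(Ω)`, `ξ ≥ 0` in `Ω`, `-Δξ = 1` in `Ω`,
`ξ = 0` on `∂Ω`. -/
def IsTorsionFn {N : ℕ} (Ω : Set (EuclideanSpace ℝ (Fin N)))
    (ξ : EuclideanSpace ℝ (Fin N) → ℝ) : Prop :=
  ContinuousOn ξ (closure Ω) ∧ ContDiffOn ℝ 2 ξ Ω ∧ (∀ x ∈ Ω, 0 ≤ ξ x) ∧
    (∀ x ∈ Ω, -lapl ξ x = 1) ∧ (∀ x ∈ frontier Ω, ξ x = 0)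

lemma lapl_const_mul {N : ℕ} {Ω : Set (EuclideanSpace ℝ (Fin N))} (hΩo : IsOpen Ω)
    {ξ : EuclideanSpace ℝ (Fin N) → ℝ} (hξ : ContDiffOn ℝ 2 ξ Ω) (c : ℝ)
    {x : EuclideanSpace ℝ (Fin N)} (hx : x ∈ Ω) :
    lapl (fun y => c * ξ y) x = c * lapl ξ x := by
  have hdiff : ∀ y ∈ Ω, DifferentiableAt ℝ ξ y := fun y hy =>
    (hξ.differentiableOn two_ne_zero y hy).differentiableAt (hΩo.mem_nhds hy)
  have hd1 : ContDiffOn ℝ 1 (fun y => fderiv ℝ ξ y) Ω :=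
    hξ.fderiv_of_isOpen hΩo (le_refl 2)
  have hd1' : ∀ y ∈ Ω, DifferentiableAt ℝ (fun z => fderiv ℝ ξ z) y := fun y hy =>
    (hd1.differentiableOn one_ne_zero y hy).differentiableAt (hΩo.mem_nhds hy)
  unfold lapl
  rw [Finset.mul_sum]
  refine Finset.sum_congr rfl fun i _ => ?_
  set e := EuclideanSpace.single (𝕜 := ℝ) i (1:ℝ) with he
  have heq : (fun y => fderiv ℝ (fun z => c * ξ z) y e) =ᶠ[nhds x]
      (fun y => c * fderiv ℝ ξ y e) := by
    filter_upwards [hΩo.mem_nhds hx] with y hy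
    rw [fderiv_const_mul (hdiff y hy) c]
    simp
  rw [heq.fderiv_eq]
  have hdin : DifferentiableAt ℝ (fun y => fderiv ℝ ξ y e) x :=
    (hd1' x hx).clm_apply (differentiableAt_const e)
  rw [fderiv_const_mul hdin c]
  simp

/-- The function `ψ = M₁ ξ` satisfies `0 ≤ ψ ≤ π/2` and is a strict supersolution of
`-Δu = μ u^q + π sin³(u)` for every `μ ∈ (0, μ₀)`, where
`μ₀ = (M₁ - π M₁³ (sup_Ω ξ)³)/(M₁^q (sup_Ω ξ)^q)`, provided `M₁ > π M₁³ (sup_Ω ξ)³`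
and `M₁ · sup_Ω ξ ≤ π/2`. -/
theorem stmt_12 {N : ℕ} (hN : 1 ≤ N) (Ω : Set (EuclideanSpace ℝ (Fin N)))
    (hΩo : IsOpen Ω) (hΩconn : IsConnected Ω) (hΩbd : Bornology.IsBounded Ω)
    (ξ : EuclideanSpace ℝ (Fin N) → ℝ) (hξ : IsTorsionFn Ω ξ)
    (hξpos : 0 < sSup (ξ '' Ω))
    (q : ℝ) (hq0 : 0 < q) (hq1 : q < 1)
    (M₁ : ℝ) (hM₁ : 0 < M₁)
    (hsmall : M₁ > π * M₁ ^ 3 * (sSup (ξ '' Ω)) ^ 3)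
    (hhalf : M₁ * sSup (ξ '' Ω) ≤ π / 2) :
    0 < (M₁ - π * M₁ ^ 3 * (sSup (ξ '' Ω)) ^ 3) / (M₁ ^ q * (sSup (ξ '' Ω)) ^ q) ∧
    ∀ μ : ℝ, 0 < μ →
      μ < (M₁ - π * M₁ ^ 3 * (sSup (ξ '' Ω)) ^ 3) / (M₁ ^ q * (sSup (ξ '' Ω)) ^ q) →
      (∀ x ∈ Ω, 0 ≤ M₁ * ξ x ∧ M₁ * ξ x ≤ π / 2) ∧
      ∀ x ∈ Ω, -lapl (fun y => M₁ * ξ y) x = M₁ ∧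
        M₁ > μ * (M₁ * ξ x) ^ q + π * Real.sin (M₁ * ξ x) ^ 3 := by
  obtain ⟨hcont, hC2, hnn, hlap, hbdry⟩ := hξ
  set S := sSup (ξ '' Ω) with hS
  have hSpos : 0 < S := hξpos
  -- boundedness above of ξ on Ω
  have hKcl : IsCompact (closure Ω) := hΩbd.isCompact_closure
  have hbd : BddAbove (ξ '' Ω) := by
    have : BddAbove (ξ '' closure Ω) := (hKcl.image_of_continuousOn hcont).bddAbove
    exact this.mono (image_mono subset_closure)
  have hle : ∀ x ∈ Ω, ξ x ≤ S := fun x hx => le_csSup hbd ⟨x, hx, rfl⟩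
  have hden : 0 < M₁ ^ q * S ^ q :=
    mul_pos (Real.rpow_pos_of_pos hM₁ q) (Real.rpow_pos_of_pos hSpos q)
  have hnum : 0 < M₁ - π * M₁ ^ 3 * S ^ 3 := sub_pos.mpr hsmall
  refine ⟨div_pos hnum hden, fun μ hμ0 hμlt => ?_⟩
  have hbounds : ∀ x ∈ Ω, 0 ≤ M₁ * ξ x ∧ M₁ * ξ x ≤ π / 2 := by
    intro x hx
    refine ⟨mul_nonneg hM₁.le (hnn x hx), ?_⟩
    calc M₁ * ξ x ≤ M₁ * S := by nlinarith [hle x hx]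
    _ ≤ π / 2 := hhalf
  refine ⟨hbounds, fun x hx => ?_⟩
  constructor
  · rw [lapl_const_mul hΩo hC2 M₁ hx]
    have := hlap x hx
    nlinarith
  · set ψ := M₁ * ξ x with hψ
    obtain ⟨hψ0, hψle⟩ := hbounds x hx
    have hψS : ψ ≤ M₁ * S := by nlinarith [hle x hx]
    -- sine bound
    have hsin0 : 0 ≤ Real.sin ψ := Real.sin_nonneg_of_nonneg_of_le_pi hψ0
      (hψle.trans (by linarith [Real.pi_pos]))
    have hsinle : Real.sin ψ ≤ ψ := Real.sin_le hψ0
    have hsin3 : Real.sin ψ ^ 3 ≤ (M₁ * S) ^ 3 := pow_le_pow_left₀ hsin0 (hsinle.trans hψS) 3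
    have hsinterm : π * Real.sin ψ ^ 3 ≤ π * M₁ ^ 3 * S ^ 3 := by
      have := Real.pi_pos
      nlinarith
    -- rpow bound
    have hrp : ψ ^ q ≤ M₁ ^ q * S ^ q := by
      rw [← Real.mul_rpow hM₁.le hSpos.le]
      exact Real.rpow_le_rpow hψ0 hψS hq0.le
    have hrp0 : 0 ≤ ψ ^ q := Real.rpow_nonneg hψ0 q
    have hμterm : μ * ψ ^ q < M₁ - π * M₁ ^ 3 * S ^ 3 := by
      have h1 : μ * ψ ^ q ≤ μ * (M₁ ^ q * S ^ q) := by nlinarith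
      have h2 : μ * (M₁ ^ q * S ^ q) < M₁ - π * M₁ ^ 3 * S ^ 3 := by
        rw [lt_div_iff₀ hden] at hμlt; linarith
      linarith
    linarith
end
end
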